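/- arXiv:1302.0072 — 2 statements merged into one kernel-verified Lean document; each statement's English description precedes it below -/
import Mathlib

section
/- A string S of length m whose smallest period is strictly greater than m/4 occurs at most 3 times in any window of length 3m/2 of a text, hence O(1) times per text block of size 3m/2. -/
/-- A string `S` of length `m` (as a function on ℕ) has period `p`. -/
def HasPeriod {α : Type*} (S : ℕ → α) (m p : ℕ) : Prop :=
  ∀ i, i + p < m → S i = S (i + p)

/-- A string `S` of length `m` whose smallest period is strictly greater than
`m/4` occurs at most 3 times in any window of length `3m/2` of a text: the
occurrences that fit in the window starting at column `c` (i.e. starting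
positions `i` with `c ≤ i` and `i + m ≤ c + 3m/2`) number at most 3. -/
theorem few_occurrences_in_window {α : Type*} [DecidableEq α]
    (S T : ℕ → α) (m : ℕ) (hm : 0 < m)
    (hper : ∀ p, 0 < p → 4 * p ≤ m → ¬ HasPeriod S m p)
    (c : ℕ) :
    ((Finset.range (c + m)).filter
        (fun i => c ≤ i ∧ 2 * (i + m) ≤ 2 * c + 3 * m ∧
          ∀ t < m, T (i + t) = S t)).card ≤ 3 := by
  classical
  set F := ((Finset.range (c + m)).filter
        (fun i => c ≤ i ∧ 2 * (i + m) ≤ 2 * c + 3 * m ∧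
          ∀ t < m, T (i + t) = S t)) with hFdef
  have hmemF : ∀ i ∈ F, c ≤ i ∧ 2 * (i + m) ≤ 2 * c + 3 * m ∧
      ∀ t < m, T (i + t) = S t := by
    intro i hi
    rw [hFdef, Finset.mem_filter] at hi
    exact hi.2
  have hgap : ∀ i ∈ F, ∀ j ∈ F, i < j → m + 1 ≤ 4 * (j - i) := by
    intro i hi j hj hij
    obtain ⟨hci, hwi, hTi⟩ := hmemF i hi
    obtain ⟨hcj, hwj, hTj⟩ := hmemF j hj
    by_contra hle4
    push_neg at hle4
    apply hper (j - i) (by omega) (by omega)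
    intro t ht
    have h1 : S t = T (j + t) := (hTj t (by omega)).symm
    have h2 : T (i + (t + (j - i))) = S (t + (j - i)) := hTi _ ht
    have heq : i + (t + (j - i)) = j + t := by omega
    rw [heq] at h2
    rw [h1, h2]
  have key : F.card ≤ (Finset.range 3).card := by
    apply Finset.card_le_card_of_injOn (fun i => 4 * (i - c) / m)
    · intro i hi
      obtain ⟨hci, hwi, _⟩ := hmemF i hi
      have h1 : 4 * (i - c) ≤ 2 * m := by omega
      have h2 : 4 * (i - c) / m ≤ 2 * m / m := Nat.div_le_div_right h1
      rw [Nat.mul_div_cancel 2 hm] at h2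
      simp only [Finset.mem_coe, Finset.mem_range]
      omega
    · intro i hi j hj hfij
      simp only [Finset.mem_coe] at hi hj
      obtain ⟨hci, hwi, _⟩ := hmemF i hi
      obtain ⟨hcj, hwj, _⟩ := hmemF j hj
      by_contra hne
      simp only at hfij
      rcases Nat.lt_or_ge i j with h | h
      · have hg := hgap i hi j hj h
        have e1 := Nat.div_add_mod (4 * (i - c)) m
        have e2 := Nat.div_add_mod (4 * (j - c)) m
        have r1 := Nat.mod_lt (4 * (i - c)) hm
        have r2 := Nat.mod_lt (4 * (j - c)) hm
        rw [← hfij] at e2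
        omega
      · have h' : j < i := by omega
        have hg := hgap j hj i hi h'
        have e1 := Nat.div_add_mod (4 * (i - c)) m
        have e2 := Nat.div_add_mod (4 * (j - c)) m
        have r1 := Nat.mod_lt (4 * (i - c)) hm
        have r2 := Nat.mod_lt (4 * (j - c)) hm
        rw [← hfij] at e2
        omega
  simpa using key
end

section
/- Vertical dueling correctness: let P and Q be 1D strings (of names) of lengths m_P and m_Q, with candidate occurrences in a text column at rows r_P < r_Q where r_Q - r_P < m_P (so the placements overlap). Let h = LCP(P[r_Q - r_P ..], Q) be the length of the longest common prefix of the suffix of P starting at offset r_Q - r_P and Q. If h < min(m_P - (r_Q - r_P), m_Q), then at most one of the two candidates can be an actual occurrence in the text; if both were occurrences, then the text row at position r_Q + h would have to equal both P[r_Q - r_P + h] and Q[h], which differ. -/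
/-- The string `P` of length `mP` occurs at row `r` of the text column `T`. -/
def OccursAt {α : Type*} (P : ℕ → α) (mP : ℕ) (T : ℕ → α) (r : ℕ) : Prop :=
  ∀ i < mP, T (r + i) = P i

/-- Vertical dueling correctness: if the candidates of `P` at row `rP` and of
`Q` at row `rQ > rP` overlap (`rQ - rP < mP`) and the longest common prefix
`h` of `P[rQ-rP ..]` and `Q` is shorter than the overlap, then at most one of
the two candidates can be an actual occurrence. -/
theorem vertical_duel_correct {α : Type*} (P Q T : ℕ → α) (mP mQ rP rQ h : ℕ)
    (hr : rP < rQ) (hov : rQ - rP < mP)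
    (hlcp : ∀ i < h, P (rQ - rP + i) = Q i)
    (hlt : h < min (mP - (rQ - rP)) mQ)
    (hmis : P (rQ - rP + h) ≠ Q h) :
    ¬ (OccursAt P mP T rP ∧ OccursAt Q mQ T rQ) := by
  rintro ⟨hP, hQ⟩
  have h1 : h < mP - (rQ - rP) := lt_of_lt_of_le hlt (min_le_left _ _)
  have h2 : h < mQ := lt_of_lt_of_le hlt (min_le_right _ _)
  have e1 : T (rP + (rQ - rP + h)) = P (rQ - rP + h) := hP _ (by omega)
  have e2 : T (rQ + h) = Q h := hQ _ h2
  have : rP + (rQ - rP + h) = rQ + h := by omega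
  exact hmis (by rw [← e1, this, e2])
end
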